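/- arXiv:1310.7536 — 7 statements merged into one kernel-verified Lean document; each statement's English description precedes it below -/
import Mathlib

section
/- Let q ≥ 2, n ≥ 1, t ≥ 0 and let C ⊆ {0,1,…,q−1}^n. For x ∈ {0,1,…,q−1}^n let B_t(x) = {y ∈ {0,1,…,q−1}^n : y_i ≤ x_i for all i and Σ_{i=1}^n (x_i − y_i) ≤ t} be the set of words obtainable from x by at most t asymmetric errors. Then the balls B_t(x), x ∈ C, are pairwise disjoint (i.e., C corrects t asymmetric errors) if and only if Δ(x,y) ≥ t+1 for all distinct x, y ∈ C. -/
/-- `N(x,y) = Σᵢ max(yᵢ - xᵢ, 0)` for words over the alphabet `{0,…,q-1} ⊆ ℤ`. -/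
def Nasym {n q : ℕ} (x y : Fin n → Fin q) : ℤ :=
  ∑ i, max (((y i : ℕ) : ℤ) - ((x i : ℕ) : ℤ)) 0

/-- The asymmetric distance `Δ(x,y) = max(N(x,y), N(y,x))`. -/
def Dasym {n q : ℕ} (x y : Fin n → Fin q) : ℤ :=
  max (Nasym x y) (Nasym y x)

/-- The ball of words obtainable from `x` by at most `t` asymmetric errors:
`B_t(x) = {y : yᵢ ≤ xᵢ for all i, Σᵢ (xᵢ - yᵢ) ≤ t}`. -/
def ballAsym {n q : ℕ} (t : ℕ) (x : Fin n → Fin q) : Set (Fin n → Fin q) :=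
  {y | (∀ i, y i ≤ x i) ∧ ∑ i, (((x i : ℕ) : ℤ) - ((y i : ℕ) : ℤ)) ≤ (t : ℤ)}

/-- A code `C ⊆ {0,…,q-1}ⁿ` corrects `t` asymmetric errors (its asymmetric-error balls
are pairwise disjoint) if and only if `Δ(x,y) ≥ t+1` for all distinct `x, y ∈ C`. -/
theorem asym_ball_disjoint_iff_dist (q n t : ℕ) (hq : 2 ≤ q) (hn : 1 ≤ n)
    (C : Set (Fin n → Fin q)) :
    (∀ x ∈ C, ∀ y ∈ C, x ≠ y → Disjoint (ballAsym t x) (ballAsym t y)) ↔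
    (∀ x ∈ C, ∀ y ∈ C, x ≠ y → (t : ℤ) + 1 ≤ Dasym x y) := by
  constructor
  · intro hdisj x hx y hy hxy
    by_contra hlt
    push_neg at hlt
    have hD : Dasym x y ≤ (t : ℤ) := by linarith
    have hN1 : Nasym x y ≤ (t : ℤ) := le_trans (le_max_left _ _) hD
    have hN2 : Nasym y x ≤ (t : ℤ) := le_trans (le_max_right _ _) hD
    set z : Fin n → Fin q := fun i => min (x i) (y i) with hz
    have hzx : z ∈ ballAsym t x := by
      refine ⟨fun i => min_le_left _ _, ?_⟩
      calc ∑ i, (((x i : ℕ) : ℤ) - ((z i : ℕ) : ℤ))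
          = Nasym y x := by
            apply Finset.sum_congr rfl
            intro i _
            rcases le_total (x i) (y i) with h | h
            · have h' : (x i : ℕ) ≤ (y i : ℕ) := h
              simp only [hz, min_eq_left h]
              omega
            · have h' : (y i : ℕ) ≤ (x i : ℕ) := h
              simp only [hz, min_eq_right h]
              omega
        _ ≤ (t : ℤ) := hN2
    have hzy : z ∈ ballAsym t y := by
      refine ⟨fun i => min_le_right _ _, ?_⟩
      calc ∑ i, (((y i : ℕ) : ℤ) - ((z i : ℕ) : ℤ))
          = Nasym x y := by
            apply Finset.sum_congr rfl
            intro i _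
            rcases le_total (x i) (y i) with h | h
            · have h' : (x i : ℕ) ≤ (y i : ℕ) := h
              simp only [hz, min_eq_left h]
              omega
            · have h' : (y i : ℕ) ≤ (x i : ℕ) := h
              simp only [hz, min_eq_right h]
              omega
        _ ≤ (t : ℤ) := hN1
    exact (Set.disjoint_left.mp (hdisj x hx y hy hxy) hzx) hzy
  · intro hdist x hx y hy hxy
    rw [Set.disjoint_left]
    rintro z ⟨hzx, hsx⟩ ⟨hzy, hsy⟩
    have hN1 : Nasym x y ≤ (t : ℤ) := by
      calc Nasym x y ≤ ∑ i, (((y i : ℕ) : ℤ) - ((z i : ℕ) : ℤ)) := by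
            apply Finset.sum_le_sum
            intro i _
            have h1 : (z i : ℕ) ≤ (x i : ℕ) := hzx i
            have h2 : (z i : ℕ) ≤ (y i : ℕ) := hzy i
            rcases max_cases (((y i : ℕ) : ℤ) - ((x i : ℕ) : ℤ)) 0 with ⟨he, _⟩ | ⟨he, _⟩ <;>
              rw [he] <;> omega
        _ ≤ (t : ℤ) := hsy
    have hN2 : Nasym y x ≤ (t : ℤ) := by
      calc Nasym y x ≤ ∑ i, (((x i : ℕ) : ℤ) - ((z i : ℕ) : ℤ)) := by
            apply Finset.sum_le_sum
            intro i _
            have h1 : (z i : ℕ) ≤ (x i : ℕ) := hzx i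
            have h2 : (z i : ℕ) ≤ (y i : ℕ) := hzy i
            rcases max_cases (((x i : ℕ) : ℤ) - ((y i : ℕ) : ℤ)) 0 with ⟨he, _⟩ | ⟨he, _⟩ <;>
              rw [he] <;> omega
        _ ≤ (t : ℤ) := hsx
    have := hdist x hx y hy hxy
    have hD : Dasym x y ≤ (t : ℤ) := max_le hN1 hN2
    linarith
end

section
/- Let c, c' ∈ {0,1,2}^m be ternary words and let u ∈ 𝔖^m(c), v ∈ 𝔖^m(c') be binary words of length 2m in their images. Then the Hamming distance satisfies d_H(u,v) ≥ d_H(c,c'). In particular, if d_H(c,c') ≥ 3 then d_H(u,v) ≥ 3. -/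
/-- The map `𝔖̃` on a binary pair: `00 ↦ 0`, `11 ↦ 0`, `01 ↦ 1`, `10 ↦ 2`. -/
def Stilde2 (p : Fin 2 × Fin 2) : Fin 3 :=
  if p.1 = p.2 then 0 else if p.1 = 0 then 1 else 2

/-- `𝔖` sends a ternary symbol `t` to the set of binary pairs mapping to it under `𝔖̃`:
`0 ↦ {00, 11}`, `1 ↦ {01}`, `2 ↦ {10}`. -/
def Sset (t : Fin 3) : Set (Fin 2 × Fin 2) := {p | Stilde2 p = t}

/-- Membership `u ∈ 𝔖^m(c)`: the binary word `u` of length `2m` has, for each `j < m`,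
its `j`-th pair of bits in `𝔖(c_j)`. -/
def Smem {m : ℕ} (c : Fin m → Fin 3) (u : Fin (2 * m) → Fin 2) : Prop :=
  ∀ j : Fin m,
    (u ⟨2 * (j : ℕ), by have := j.isLt; omega⟩,
     u ⟨2 * (j : ℕ) + 1, by have := j.isLt; omega⟩) ∈ Sset (c j)

/-- For ternary words `c, c'` and binary words `u ∈ 𝔖^m(c)`, `v ∈ 𝔖^m(c')`, the Hamming
distance satisfies `d_H(u,v) ≥ d_H(c,c')`; in particular `d_H(c,c') ≥ 3 → d_H(u,v) ≥ 3`. -/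
theorem hammingDist_image_ge (m : ℕ) (c c' : Fin m → Fin 3)
    (u v : Fin (2 * m) → Fin 2) (hu : Smem c u) (hv : Smem c' v) :
    hammingDist c c' ≤ hammingDist u v ∧
    (3 ≤ hammingDist c c' → 3 ≤ hammingDist u v) := by
  have key : hammingDist c c' ≤ hammingDist u v := by
    unfold hammingDist
    set f : Fin m → Fin (2 * m) := fun j =>
      if u ⟨2 * (j : ℕ), by have := j.isLt; omega⟩ ≠ v ⟨2 * (j : ℕ), by have := j.isLt; omega⟩
      then ⟨2 * (j : ℕ), by have := j.isLt; omega⟩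
      else ⟨2 * (j : ℕ) + 1, by have := j.isLt; omega⟩ with hf
    apply Finset.card_le_card_of_injOn f
    · intro j hj
      simp only [Finset.mem_coe, Finset.mem_filter, Finset.mem_univ, true_and] at hj ⊢
      have h1 := hu j
      have h2 := hv j
      simp only [Sset, Set.mem_setOf_eq] at h1 h2
      by_cases h : u ⟨2 * (j : ℕ), by have := j.isLt; omega⟩ ≠ v ⟨2 * (j : ℕ), by have := j.isLt; omega⟩
      · simp only [hf, if_pos h]; exact h
      · simp only [hf, if_neg h]
        push_neg at h
        intro h'
        apply hj
        rw [← h1, ← h2, h, h']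
    · intro j1 hj1 j2 hj2 heq
      have : 2 * (j1 : ℕ) = 2 * (j2 : ℕ) ∨ 2 * (j1 : ℕ) = 2 * (j2 : ℕ) + 1 ∨
          2 * (j1 : ℕ) + 1 = 2 * (j2 : ℕ) ∨ 2 * (j1 : ℕ) + 1 = 2 * (j2 : ℕ) + 1 := by
        simp only [hf] at heq
        split at heq <;> split at heq <;> simp [Fin.ext_iff] at heq <;> omega
      have : (j1 : ℕ) = (j2 : ℕ) := by omega
      exact Fin.ext this
  exact ⟨key, fun h => le_trans h key⟩
end

section
/- Let n be even and g ∈ ℤ/(n+1)ℤ. Then the Varshamov–Tenengol'ts code V_g is closed under the following operation for every i ∈ {1,…,n/2}: if v ∈ V_g has v_i = v_{n+1−i} (both 0 or both 1), then the word v' obtained from v by complementing both coordinates i and n+1−i (and leaving all other coordinates unchanged) is also in V_g. Consequently, under the pairing of coordinate i with coordinate n+1−i, V_g is a ternary code, i.e., 𝔖^{n/2}(𝔖̃^{n/2}(V_g)) = V_g. -/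
/-- The Varshamov–Tenengol'ts code `V_g = {x ∈ {0,1}ⁿ : Σᵢ i·xᵢ ≡ g (mod n+1)}`
(coordinates indexed `1,…,n`, here `i : Fin n` stands for coordinate `i+1`). -/
def VT (n : ℕ) (g : ZMod (n + 1)) : Set (Fin n → Fin 2) :=
  {x | ∑ i : Fin n, ((((i : ℕ) + 1 : ℕ) : ZMod (n + 1)) * ((x i : ℕ) : ZMod (n + 1))) = g}

/-- Key lemma: if the "difference" `x i - v i` (in `ZMod (n+1)`) is symmetric under
`Fin.rev`, then the VT weighted sums of `x` and `v` agree (for `n` even). -/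
lemma VT_sum_eq_of_symm_diff (n : ℕ) (hn : Even n) (x v : Fin n → Fin 2)
    (hd : ∀ i : Fin n,
      ((x i : ℕ) : ZMod (n + 1)) - ((v i : ℕ) : ZMod (n + 1)) =
      ((x (Fin.rev i) : ℕ) : ZMod (n + 1)) - ((v (Fin.rev i) : ℕ) : ZMod (n + 1))) :
    ∑ i : Fin n, ((((i : ℕ) + 1 : ℕ) : ZMod (n + 1)) * ((x i : ℕ) : ZMod (n + 1))) =
    ∑ i : Fin n, ((((i : ℕ) + 1 : ℕ) : ZMod (n + 1)) * ((v i : ℕ) : ZMod (n + 1))) := by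
  set w : Fin n → ZMod (n + 1) := fun i => (((i : ℕ) + 1 : ℕ) : ZMod (n + 1)) with hw
  set d : Fin n → ZMod (n + 1) :=
    fun i => ((x i : ℕ) : ZMod (n + 1)) - ((v i : ℕ) : ZMod (n + 1)) with hdd
  have hwrev : ∀ i : Fin n, w i + w (Fin.rev i) = 0 := by
    intro i
    have h1 : ((i : ℕ) + 1) + (((Fin.rev i : Fin n) : ℕ) + 1) = n + 1 := by
      rw [Fin.val_rev]
      have := i.isLt
      omega
    rw [hw]
    simp only
    rw [← Nat.cast_add, h1, ZMod.natCast_self]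
  have hrevsum : ∑ i : Fin n, w (Fin.rev i) * d (Fin.rev i) = ∑ i : Fin n, w i * d i :=
    Fintype.sum_equiv Fin.revPerm _ _ (fun i => rfl)
  have hd' : ∀ i : Fin n, d i = d (Fin.rev i) := hd
  have hflip : ∑ i : Fin n, w i * d i = ∑ i : Fin n, w (Fin.rev i) * d i :=
    calc ∑ i : Fin n, w i * d i = ∑ i : Fin n, w (Fin.rev i) * d (Fin.rev i) := hrevsum.symm
      _ = ∑ i : Fin n, w (Fin.rev i) * d i :=
        Finset.sum_congr rfl fun i _ => by rw [← hd' i]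
  have hS : ∑ i : Fin n, w i * d i = 0 := by
    have h2 : (2 : ZMod (n + 1)) * (∑ i : Fin n, w i * d i) = 0 := by
      rw [two_mul]
      nth_rewrite 2 [hflip]
      rw [← Finset.sum_add_distrib]
      refine Finset.sum_eq_zero fun i _ => ?_
      rw [← add_mul, hwrev i, zero_mul]
    have hu : IsUnit (2 : ZMod (n + 1)) := by
      have : IsUnit ((2 : ℕ) : ZMod (n + 1)) :=
        (ZMod.isUnit_iff_coprime 2 (n + 1)).2 (Nat.coprime_two_left.2 hn.add_one)
      simpa using this
    exact (hu.mul_right_eq_zero).mp h2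
  have : ∑ i : Fin n, w i * ((x i : ℕ) : ZMod (n + 1))
      - ∑ i : Fin n, w i * ((v i : ℕ) : ZMod (n + 1)) = 0 := by
    rw [← Finset.sum_sub_distrib]
    rw [← hS]
    refine Finset.sum_congr rfl fun i _ => ?_
    rw [hdd]
    ring
  exact sub_eq_zero.mp this

/-- For `n` even, the VT code `V_g` is closed under complementing a pair of coordinates
`i` and `n+1-i` (0-based: `i` and `Fin.rev i`) whose entries are equal; consequently,
under this pairing `V_g` is ternary: `𝔖^{n/2}(𝔖̃^{n/2}(V_g)) = V_g`, i.e. the set of all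
binary words having the same pairwise `𝔖̃`-image as some codeword is exactly `V_g`. -/
theorem VT_even_is_ternary (n : ℕ) (hn : Even n) (hpos : 1 ≤ n) (g : ZMod (n + 1)) :
    (∀ v ∈ VT n g, ∀ i : Fin n, (i : ℕ) < n / 2 → v i = v (Fin.rev i) →
      (fun j => if j = i ∨ j = Fin.rev i then 1 - v j else v j) ∈ VT n g) ∧
    {x : Fin n → Fin 2 | ∃ v ∈ VT n g, ∀ i : Fin n,
        Stilde2 (x i, x (Fin.rev i)) = Stilde2 (v i, v (Fin.rev i))} = VT n g := by
  constructor
  · intro v hv i hi hvi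
    set x : Fin n → Fin 2 := fun j => if j = i ∨ j = Fin.rev i then 1 - v j else v j with hx
    have hrr : ∀ j : Fin n, Fin.rev (Fin.rev j) = j := fun j => Fin.rev_rev j
    show x ∈ VT n g
    rw [VT, Set.mem_setOf_eq]
    rw [VT, Set.mem_setOf_eq] at hv
    rw [← hv]
    apply VT_sum_eq_of_symm_diff n hn x v
    intro j
    by_cases hji : j = i
    · subst hji
      have h1 : x j = 1 - v j := by simp [hx]
      have h2 : x (Fin.rev j) = 1 - v (Fin.rev j) := by simp [hx]
      rw [h1, h2, ← hvi]
    · by_cases hjr : j = Fin.rev i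
      · subst hjr
        have h1 : x (Fin.rev i) = 1 - v (Fin.rev i) := by simp [hx]
        have h2 : x (Fin.rev (Fin.rev i)) = 1 - v (Fin.rev (Fin.rev i)) := by
          rw [hrr]; simp [hx]
        rw [h1, h2, hrr, ← hvi]
      · have h1 : x j = v j := by
          simp only [hx]
          rw [if_neg (by tauto)]
        have h2 : x (Fin.rev j) = v (Fin.rev j) := by
          simp only [hx]
          rw [if_neg]
          push_neg
          constructor
          · intro h; exact hjr (by rw [← h, hrr j])
          · intro h; exact hji (Fin.rev_injective h)
        rw [h1, h2, sub_self, sub_self]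
  · ext x
    simp only [Set.mem_setOf_eq]
    constructor
    · rintro ⟨v, hv, hst⟩
      rw [VT, Set.mem_setOf_eq] at hv ⊢
      rw [← hv]
      apply VT_sum_eq_of_symm_diff n hn x v
      intro i
      have gen : ∀ a b c d : Fin 2, Stilde2 (a, b) = Stilde2 (c, d) →
          (a = c ∧ b = d) ∨ (a = b ∧ c = d) := by decide
      have key := gen _ _ _ _ (hst i)
      rcases key with ⟨h1, h2⟩ | ⟨h1, h2⟩
      · rw [h1, h2, sub_self, sub_self]
      · rw [← h1, ← h2]
    · intro hx
      exact ⟨x, hx, fun i => rfl⟩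
end

section
/- Let G be a finite abelian group of odd order n+1 (so n is even) with non-identity elements g_1,…,g_n, and let g ∈ G. Then the Constantin–Rao code C_g is closed under the following operation: if x ∈ C_g and i ≠ j are indices with g_j = −g_i (such j exists and is unique, and j ≠ i since no non-identity element of a group of odd order is its own inverse) and x_i = x_j (both 0 or both 1), then the word x' obtained from x by complementing both coordinates i and j is also in C_g. Consequently, under the pairing of each coordinate h with the coordinate of its inverse −h, C_g is a ternary code, i.e., 𝔖^{n/2}(𝔖̃^{n/2}(C_g)) = C_g. -/
/-- The Constantin–Rao code `C_g = {x ∈ {0,1}ⁿ : Σᵢ xᵢ·gᵢ = g}`, where `e : Fin n → G`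
enumerates the non-identity elements of the abelian group `G`. -/
def CR {n : ℕ} {G : Type} [AddCommGroup G] (e : Fin n → G) (g : G) :
    Set (Fin n → Fin 2) :=
  {x | ∑ i : Fin n, (x i : ℕ) • e i = g}

private lemma stilde_diff : ∀ a b c d : Fin 2, Stilde2 (a, b) = Stilde2 (c, d) →
    ((a : ℕ) : ℤ) - ((c : ℕ) : ℤ) = ((b : ℕ) : ℤ) - ((d : ℕ) : ℤ) := by decide

private lemma fin2_cases : ∀ a : Fin 2, a = 0 ∨ a = 1 := by decide

/-- Let `G` be a finite abelian group of odd order `n+1` with non-identity elements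
enumerated by `e : Fin n → G`. Then the Constantin–Rao code `C_g` is closed under
complementing two coordinates `i ≠ j` with `e j = -e i` whose entries are equal;
consequently, under the pairing `π` matching each coordinate with that of its inverse,
`C_g` is ternary: `𝔖^{n/2}(𝔖̃^{n/2}(C_g)) = C_g`. -/
theorem CR_is_ternary (n : ℕ) (G : Type) [AddCommGroup G] [Fintype G] [DecidableEq G]
    (hcard : Fintype.card G = n + 1) (hodd : Odd (n + 1))
    (e : Fin n → G) (hinj : Function.Injective e) (hne : ∀ i, e i ≠ 0)
    (g : G) (π : Fin n → Fin n) (hπ : ∀ i, e (π i) = -e i) :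
    (∀ x ∈ CR e g, ∀ i j : Fin n, i ≠ j → e j = -e i → x i = x j →
      (fun l => if l = i ∨ l = j then 1 - x l else x l) ∈ CR e g) ∧
    {x : Fin n → Fin 2 | ∃ v ∈ CR e g, ∀ i : Fin n,
        Stilde2 (x i, x (π i)) = Stilde2 (v i, v (π i))} = CR e g := by
  have hCR : ∀ x : Fin n → Fin 2,
      x ∈ CR e g ↔ ∑ i : Fin n, (((x i : ℕ) : ℤ)) • e i = g := by
    intro x
    simp only [CR, Set.mem_setOf_eq, natCast_zsmul]
  constructor
  · -- closure under complementing a compatible pair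
    intro x hx i j hij hej hxij
    rw [hCR] at hx ⊢
    set y : Fin n → Fin 2 := fun l => if l = i ∨ l = j then 1 - x l else x l with hy
    have key : ∑ l : Fin n, (((y l : ℕ) : ℤ) • e l - ((x l : ℕ) : ℤ) • e l) = 0 := by
      have h0 : ∀ l ∈ Finset.univ, l ∉ ({i, j} : Finset (Fin n)) →
          ((((y l : ℕ) : ℤ) • e l - ((x l : ℕ) : ℤ) • e l)) = 0 := by
        intro l _ hl
        simp only [Finset.mem_insert, Finset.mem_singleton, not_or] at hl
        have : y l = x l := by simp [hy, hl.1, hl.2]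
        rw [this, sub_self]
      rw [← Finset.sum_subset (Finset.subset_univ ({i, j} : Finset (Fin n))) h0,
        Finset.sum_pair hij]
      have hyi : y i = 1 - x i := by simp [hy]
      have hyj : y j = 1 - x j := by simp [hy]
      rcases fin2_cases (x i) with h | h
      · have hxj : x j = 0 := by rw [← hxij, h]
        rw [hyi, hyj, h, hxj, hej]
        norm_num
      · have hxj : x j = 1 := by rw [← hxij, h]
        rw [hyi, hyj, h, hxj, hej]
        norm_num
    rw [Finset.sum_sub_distrib, sub_eq_zero] at key
    rw [key, hx]
  · -- the ternary property
    ext x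
    simp only [Set.mem_setOf_eq]
    constructor
    · rintro ⟨v, hv, hiff⟩
      rw [hCR] at hv
      refine (hCR x).mpr ?_
      set d : Fin n → ℤ := fun i => ((x i : ℕ) : ℤ) - ((v i : ℕ) : ℤ) with hdd
      have hd : ∀ i, d i = d (π i) := fun i => stilde_diff _ _ _ _ (hiff i)
      set S : G := ∑ i : Fin n, d i • e i with hS
      have hππ : Function.Involutive π := fun i => hinj (by rw [hπ, hπ, neg_neg])
      have hSneg : S = -S := by
        have := Equiv.sum_comp (Function.Involutive.toPerm π hππ)
          (fun i => d i • e i)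
        calc S = ∑ i : Fin n, d (π i) • e (π i) := this.symm
          _ = ∑ i : Fin n, -(d i • e i) := by
              refine Finset.sum_congr rfl fun i _ => ?_
              rw [← hd, hπ, smul_neg]
          _ = -S := by rw [Finset.sum_neg_distrib]
      have h2 : (2 : ℕ) • S = 0 := by
        rw [two_nsmul]
        nth_rewrite 1 [hSneg]
        exact neg_add_cancel S
      have hS0 : S = 0 := by
        obtain ⟨k, hk⟩ := hodd
        have hc : (n + 1) • S = 0 := by
          rw [← hcard]; exact card_nsmul_eq_zero
        have hn : n = 2 * k := by omega
        have hns : n • S = 0 := by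
          rw [hn, mul_nsmul, h2, smul_zero]
        have := succ_nsmul S n
        rw [hc, hns, zero_add] at this
        exact this.symm
      have hsplit : ∑ i : Fin n, ((x i : ℕ) : ℤ) • e i
          = (∑ i : Fin n, ((v i : ℕ) : ℤ) • e i) + S := by
        rw [hS, ← Finset.sum_add_distrib]
        refine Finset.sum_congr rfl fun i _ => ?_
        rw [hdd]
        rw [sub_smul]
        abel
      rw [hsplit, hS0, add_zero, hv]
    · intro hx
      exact ⟨x, hx, fun i => rfl⟩
end

section
/- Let n be odd and g ∈ ℤ/(n+1)ℤ. Then the Varshamov–Tenengol'ts code V_g is closed under the following operation for every i ∈ {1,…,n} with i ≠ (n+1)/2: if v ∈ V_g has v_i = v_{n+1−i} (both 0 or both 1), then the word v' obtained from v by complementing both coordinates i and n+1−i is also in V_g. Consequently, pairing coordinate i with coordinate n+1−i for i ≠ (n+1)/2 and leaving coordinate (n+1)/2 as a single bit, V_g is generalized ternary, i.e., 𝔖^{(n−1)/2}(𝔖̃^{(n−1)/2}(V_g)) = V_g where the maps act on the paired coordinates. -/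
lemma coe_rev_add_one (n : ℕ) (i : Fin n) :
    ((((Fin.rev i : ℕ) + 1 : ℕ)) : ZMod (n + 1)) = -((((i : ℕ) + 1 : ℕ)) : ZMod (n + 1)) := by
  have hi : (i : ℕ) < n := i.isLt
  have h : ((Fin.rev i : ℕ) + 1) + ((i : ℕ) + 1) = n + 1 := by
    rw [Fin.val_rev]; omega
  have h2 := congrArg (fun m : ℕ => (m : ZMod (n + 1))) h
  have h0 : ((n : ZMod (n + 1)) + 1) = 0 := by
    exact_mod_cast ZMod.natCast_self (n + 1)
  push_cast at h2 ⊢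
  linear_combination h2 + h0

lemma Stilde2_eq_cases (a b c d : Fin 2) (h : Stilde2 (a, b) = Stilde2 (c, d)) :
    (a = b ∧ c = d) ∨ (a = c ∧ b = d) := by
  revert h; revert a b c d; decide

/-- Sums of differences over paired coordinates vanish. -/
lemma sum_pair_diff (n : ℕ) (x v : Fin n → Fin 2)
    (hmid : ∀ i : Fin n, Fin.rev i = i → x i = v i)
    (hpair : ∀ i : Fin n, x i = x (Fin.rev i) ∧ v i = v (Fin.rev i) ∨ x i = v i) :
    ∑ i : Fin n, ((((i : ℕ) + 1 : ℕ) : ZMod (n + 1)) *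
        (((x i : ℕ) : ZMod (n + 1)) - ((v i : ℕ) : ZMod (n + 1)))) = 0 := by
  classical
  refine Finset.sum_ninvolution Fin.rev ?_ ?_ (fun _ => Finset.mem_univ _) Fin.rev_rev
  · intro a
    rcases eq_or_ne (Fin.rev a) a with hfix | hne
    · rw [hfix, hmid a hfix]; ring
    · rcases hpair a with ⟨hx, hv⟩ | hxv
      · rw [← hx, ← hv, coe_rev_add_one]; ring
      · have hx2 : x (Fin.rev a) = v (Fin.rev a) := by
          rcases hpair (Fin.rev a) with ⟨hx', hv'⟩ | h'
          · rw [Fin.rev_rev] at hx' hv'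
            rw [hx', hv', hxv]
          · exact h'
        rw [hxv, hx2]; ring
  · intro a ha hfix
    exact ha (by rw [hmid a hfix]; ring)

/-- For `n` odd, the VT code `V_g` is closed under complementing a pair of coordinates
`i ≠ (n+1)/2` and `n+1-i` (0-based: `i` and `Fin.rev i`) whose entries are equal;
consequently, pairing coordinate `i` with `n+1-i` and leaving the middle coordinate
`(n+1)/2` as a single bit, `V_g` is generalized ternary:
`𝔖^{(n-1)/2}(𝔖̃^{(n-1)/2}(V_g)) = V_g`, i.e. the set of binary words agreeing with some
codeword in the middle bit and in the pairwise `𝔖̃`-image is exactly `V_g`. -/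
theorem VT_odd_is_generalized_ternary (n : ℕ) (hn : Odd n) (g : ZMod (n + 1)) :
    (∀ v ∈ VT n g, ∀ i : Fin n, (i : ℕ) + 1 ≠ (n + 1) / 2 → v i = v (Fin.rev i) →
      (fun j => if j = i ∨ j = Fin.rev i then 1 - v j else v j) ∈ VT n g) ∧
    {x : Fin n → Fin 2 | ∃ v ∈ VT n g,
        (∀ i : Fin n, Fin.rev i = i → x i = v i) ∧
        ∀ i : Fin n, Stilde2 (x i, x (Fin.rev i)) = Stilde2 (v i, v (Fin.rev i))} =
      VT n g := by
  constructor
  · intro v hv i hi hvi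
    set x : Fin n → Fin 2 := fun j => if j = i ∨ j = Fin.rev i then 1 - v j else v j with hx
    have hrev : Fin.rev i ≠ i := by
      intro h
      apply hi
      have := congrArg Fin.val h
      rw [Fin.val_rev] at this
      omega
    show x ∈ VT n g
    have hmid : ∀ j : Fin n, Fin.rev j = j → x j = v j := by
      intro j hj
      have h1 : j ≠ i := fun h => hrev (h ▸ hj)
      have h2 : j ≠ Fin.rev i := by
        intro h
        subst h
        rw [Fin.rev_rev] at hj
        exact hrev hj.symm
      simp [hx, h1, h2]
    have hpair : ∀ j : Fin n, x j = x (Fin.rev j) ∧ v j = v (Fin.rev j) ∨ x j = v j := by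
      intro j
      rcases eq_or_ne j i with rfl | hji
      · left
        constructor
        · simp [hx, hvi]
        · exact hvi
      · rcases eq_or_ne j (Fin.rev i) with rfl | hjr
        · left
          constructor
          · simp [hx, Fin.rev_rev, hvi]
          · rw [Fin.rev_rev, hvi]
        · right; simp [hx, hji, hjr]
    have hsum := sum_pair_diff n x v hmid hpair
    unfold VT at hv ⊢
    simp only [Set.mem_setOf_eq] at hv ⊢
    calc ∑ j : Fin n, ((((j : ℕ) + 1 : ℕ) : ZMod (n + 1)) * ((x j : ℕ) : ZMod (n + 1)))
        = (∑ j : Fin n, ((((j : ℕ) + 1 : ℕ) : ZMod (n + 1)) * ((v j : ℕ) : ZMod (n + 1))))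
          + ∑ j : Fin n, ((((j : ℕ) + 1 : ℕ) : ZMod (n + 1)) *
            (((x j : ℕ) : ZMod (n + 1)) - ((v j : ℕ) : ZMod (n + 1)))) := by
          rw [← Finset.sum_add_distrib]
          exact Finset.sum_congr rfl fun j _ => by ring
      _ = g := by rw [hsum, hv, add_zero]
  · ext x
    simp only [Set.mem_setOf_eq]
    constructor
    · rintro ⟨v, hv, hmid, hst⟩
      have hpair : ∀ i : Fin n, x i = x (Fin.rev i) ∧ v i = v (Fin.rev i) ∨ x i = v i := by
        intro i
        rcases Stilde2_eq_cases _ _ _ _ (hst i) with h | h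
        · exact Or.inl h
        · exact Or.inr h.1
      have hsum := sum_pair_diff n x v hmid hpair
      unfold VT at hv ⊢
      simp only [Set.mem_setOf_eq] at hv ⊢
      calc ∑ j : Fin n, ((((j : ℕ) + 1 : ℕ) : ZMod (n + 1)) * ((x j : ℕ) : ZMod (n + 1)))
          = (∑ j : Fin n, ((((j : ℕ) + 1 : ℕ) : ZMod (n + 1)) * ((v j : ℕ) : ZMod (n + 1))))
            + ∑ j : Fin n, ((((j : ℕ) + 1 : ℕ) : ZMod (n + 1)) *
              (((x j : ℕ) : ZMod (n + 1)) - ((v j : ℕ) : ZMod (n + 1)))) := by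
            rw [← Finset.sum_add_distrib]
            exact Finset.sum_congr rfl fun j _ => by ring
        _ = g := by rw [hsum, hv, add_zero]
    · intro hx
      exact ⟨x, hx, fun _ _ => rfl, fun _ => rfl⟩
end

section
/- Let q > 2, m ≥ 1, and let C' ⊆ ℤ_q^m be single-error-correcting for the channel ℛ_q with |C'| = K. Identify ℤ_q with {0,1,…,q−1} ⊆ ℤ and define C = {z ∈ {0,…,q−1}^{2m−1} : (z_1, ((z_{2j+1} − z_{2j}) mod q)_{j=1,…,m−1}) ∈ C'} (the first outer symbol is sent directly, the remaining m−1 outer symbols are encoded as differences of pairs). Then |C| = q^{m−1}·K and Δ(x,y) ≥ 2 for all distinct x, y ∈ C, i.e., C is a 1-code of odd length 2m−1 over the q-ary asymmetric channel. -/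
/-- The `ℛ_q`-ball of `c ∈ ℤ_qᵐ`: words obtained from `c` by changing at most one
coordinate by `±1 (mod q)`. -/
def RBall {q m : ℕ} (c : Fin m → ZMod q) : Set (Fin m → ZMod q) :=
  {d | d = c ∨ ∃ i, (d i = c i + 1 ∨ d i = c i - 1) ∧ ∀ j, j ≠ i → d j = c j}

/-- The outer word `(z_1, ((z_{2j+1} - z_{2j}) mod q)_{j=1,…,m-1})` of a word
`z ∈ {0,…,q-1}^{2m-1}` (first symbol sent directly, then pairwise differences). -/
def oddOuter (q m : ℕ) (z : Fin (2 * m - 1) → Fin q) : Fin m → ZMod q :=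
  fun j =>
    if h : (j : ℕ) = 0 then ((z ⟨0, by have := j.isLt; omega⟩ : ℕ) : ZMod q)
    else ((z ⟨2 * (j : ℕ), by have := j.isLt; omega⟩ : ℕ) : ZMod q) -
         ((z ⟨2 * (j : ℕ) - 1, by have := j.isLt; omega⟩ : ℕ) : ZMod q)

section helpers

variable {q m : ℕ}

lemma rball_one (hq : 1 < q) (c c' : Fin m → ZMod q) (j0 : Fin m) (u : ZMod q)
    (hu : u = 1 ∨ u = -1) (h : c j0 = c' j0 + u) (hrest : ∀ j, j ≠ j0 → c j = c' j) :
    c ≠ c' ∧ ¬ Disjoint (RBall c) (RBall c') := by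
  haveI : Fact (1 < q) := ⟨hq⟩
  have hu0 : u ≠ 0 := by
    rcases hu with rfl | rfl
    · exact one_ne_zero
    · exact neg_ne_zero.mpr one_ne_zero
  have hne : c ≠ c' := by
    intro hcc
    rw [hcc, left_eq_add] at h
    exact hu0 h
  refine ⟨hne, Set.not_disjoint_iff.mpr ⟨c', ?_, Or.inl rfl⟩⟩
  refine Or.inr ⟨j0, ?_, fun j hj => (hrest j hj).symm⟩
  rcases hu with rfl | rfl
  · right; rw [h]; ring
  · left; rw [h]; ring

lemma rball_two (hq : 2 < q) (c c' : Fin m → ZMod q) (j0 : Fin m) (u : ZMod q)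
    (hu : u = 1 ∨ u = -1) (h : c j0 = c' j0 + u + u) (hrest : ∀ j, j ≠ j0 → c j = c' j) :
    c ≠ c' ∧ ¬ Disjoint (RBall c) (RBall c') := by
  haveI : Fact (1 < q) := ⟨by omega⟩
  have h2 : u + u ≠ 0 := by
    rcases hu with rfl | rfl
    · have : ((2 : ℤ) : ZMod q) ≠ 0 := by
        rw [Ne, ZMod.intCast_zmod_eq_zero_iff_dvd]
        intro h
        have := Int.le_of_dvd (by norm_num) h
        omega
      simpa [one_add_one_eq_two] using this
    · have : ((-2 : ℤ) : ZMod q) ≠ 0 := by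
        rw [Ne, ZMod.intCast_zmod_eq_zero_iff_dvd, Int.dvd_neg]
        intro h
        have := Int.le_of_dvd (by norm_num) h
        omega
      intro hz
      apply this
      push_cast
      linear_combination hz
  have hne : c ≠ c' := by
    intro hcc
    rw [hcc, add_assoc, left_eq_add] at h
    exact h2 h
  refine ⟨hne, Set.not_disjoint_iff.mpr ⟨Function.update c j0 (c j0 - u), ?_, ?_⟩⟩
  · refine Or.inr ⟨j0, ?_, fun j hj => Function.update_of_ne hj _ _⟩
    rw [Function.update_self]
    rcases hu with rfl | rfl
    · exact Or.inr rfl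
    · left; ring
  · refine Or.inr ⟨j0, ?_, fun j hj => by
      rw [Function.update_of_ne hj]; exact hrest j hj⟩
    rw [Function.update_self, h]
    rcases hu with rfl | rfl
    · left; ring
    · right; ring

lemma rball_mixed (hq : 1 < q) (c c' : Fin m → ZMod q) (j0 j1 : Fin m) (hj : j0 ≠ j1)
    (u v : ZMod q) (hu : u = 1 ∨ u = -1) (hv : v = 1 ∨ v = -1)
    (h0 : c j0 = c' j0 + u) (h1 : c j1 = c' j1 + v)
    (hrest : ∀ j, j ≠ j0 → j ≠ j1 → c j = c' j) :
    c ≠ c' ∧ ¬ Disjoint (RBall c) (RBall c') := by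
  haveI : Fact (1 < q) := ⟨hq⟩
  have hu0 : u ≠ 0 := by
    rcases hu with rfl | rfl
    · exact one_ne_zero
    · exact neg_ne_zero.mpr one_ne_zero
  have hne : c ≠ c' := by
    intro hcc
    rw [hcc, left_eq_add] at h0
    exact hu0 h0
  refine ⟨hne, Set.not_disjoint_iff.mpr ⟨Function.update c j0 (c' j0), ?_, ?_⟩⟩
  · refine Or.inr ⟨j0, ?_, fun j hj => Function.update_of_ne hj _ _⟩
    rw [Function.update_self, h0]
    rcases hu with rfl | rfl
    · right; ring
    · left; ring
  · refine Or.inr ⟨j1, ?_, fun j hj => ?_⟩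
    · rw [Function.update_of_ne (Ne.symm hj), h1]
      rcases hv with rfl | rfl
      · exact Or.inl rfl
      · right; ring
    · by_cases hj0 : j = j0
      · subst hj0; rw [Function.update_self]
      · rw [Function.update_of_ne hj0]; exact hrest j hj0 hj


end helpers

section count

variable (q m : ℕ) [NeZero q]
def oddIn (z : Fin (2 * m - 1) → Fin q) : Fin (m - 1) → Fin q :=
  fun j => z ⟨2 * (j : ℕ) + 1, by have := j.isLt; omega⟩
def oddDec (c : Fin m → ZMod q) (w : Fin (m - 1) → Fin q) : Fin (2 * m - 1) → Fin q :=
  fun i =>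
    if h0 : (i : ℕ) = 0 then ⟨(c ⟨0, by have := i.isLt; omega⟩).val, ZMod.val_lt _⟩
    else if h1 : (i : ℕ) % 2 = 1 then w ⟨(i : ℕ) / 2, by have := i.isLt; omega⟩
    else ⟨(c ⟨(i : ℕ) / 2, by have := i.isLt; omega⟩ +
          ((w ⟨(i : ℕ) / 2 - 1, by have := i.isLt; omega⟩ : ℕ) : ZMod q)).val, ZMod.val_lt _⟩

lemma oddDec_left (z : Fin (2 * m - 1) → Fin q) : oddDec q m (oddOuter q m z) (oddIn q m z) = z := by
  funext i
  by_cases h0 : (i : ℕ) = 0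
  · simp only [oddDec, oddOuter, oddIn, dif_pos h0]
    have e : (⟨0, by have := i.isLt; omega⟩ : Fin (2 * m - 1)) = i := Fin.ext (by simp only [Fin.val_mk]; omega)
    ext
    simp only [Fin.val_mk]
    rw [dif_pos trivial, e]
    exact ZMod.val_cast_of_lt (z i).isLt
  · by_cases h1 : (i : ℕ) % 2 = 1
    · simp only [oddDec, oddOuter, oddIn, dif_neg h0, dif_pos h1]
      congr 1
      exact Fin.ext (by simp only [Fin.val_mk]; omega)
    · simp only [oddDec, oddOuter, oddIn, dif_neg h0, dif_neg h1]
      have e1 : (⟨2 * ((i : ℕ) / 2),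
          by have := i.isLt; omega⟩ : Fin (2 * m - 1)) = i := Fin.ext (by simp only [Fin.val_mk]; omega)
      have e2 : (⟨2 * ((i : ℕ) / 2 - 1) + 1,
          by have := i.isLt; omega⟩ : Fin (2 * m - 1)) =
          (⟨2 * ((i : ℕ) / 2) - 1,
          by have := i.isLt; omega⟩ : Fin (2 * m - 1)) := Fin.ext (by simp only [Fin.val_mk]; omega)
      ext
      simp only [Fin.val_mk]
      rw [dif_neg (by omega : ¬ (i : ℕ) / 2 = 0), e1, e2, sub_add_cancel]
      exact ZMod.val_cast_of_lt (z i).isLt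

lemma oddDec_right_outer (hm : 1 ≤ m) (c : Fin m → ZMod q) (w : Fin (m - 1) → Fin q) :
    oddOuter q m (oddDec q m c w) = c := by
  funext j
  by_cases h0 : (j : ℕ) = 0
  · simp only [oddOuter, oddDec, dif_pos h0]
    rw [dif_pos trivial]
    simp only [Fin.val_mk]
    rw [ZMod.natCast_zmod_val]
    congr 1
    exact Fin.ext (by simp only [Fin.val_mk]; omega)
  · simp only [oddOuter, oddDec, oddIn, dif_neg h0, Fin.val_mk]
    rw [dif_neg (by omega : ¬ 2 * (j : ℕ) = 0),
      dif_neg (by omega : ¬ 2 * (j : ℕ) % 2 = 1),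
      dif_neg (by omega : ¬ 2 * (j : ℕ) - 1 = 0),
      dif_pos (by omega : (2 * (j : ℕ) - 1) % 2 = 1)]
    rw [ZMod.natCast_zmod_val]
    have ec : (⟨2 * (j : ℕ) / 2, by have := j.isLt; omega⟩ : Fin m) = j :=
      Fin.ext (by simp only [Fin.val_mk]; omega)
    have ew : (⟨2 * (j : ℕ) / 2 - 1, by have := j.isLt; omega⟩ : Fin (m - 1)) =
        (⟨(2 * (j : ℕ) - 1) / 2, by have := j.isLt; omega⟩ : Fin (m - 1)) :=
      Fin.ext (by simp only [Fin.val_mk]; omega)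
    rw [ec, ew, add_sub_cancel_right]

lemma oddDec_right_inner (c : Fin m → ZMod q) (w : Fin (m - 1) → Fin q) :
    oddIn q m (oddDec q m c w) = w := by
  funext j
  simp only [oddIn, oddDec, Fin.val_mk]
  rw [dif_neg (by omega : ¬ 2 * (j : ℕ) + 1 = 0),
    dif_pos (by omega : (2 * (j : ℕ) + 1) % 2 = 1)]
  congr 1
  exact Fin.ext (by simp only [Fin.val_mk]; omega)

noncomputable def oddEquiv (hm : 1 ≤ m) :
    (Fin (2 * m - 1) → Fin q) ≃ (Fin m → ZMod q) × (Fin (m - 1) → Fin q) where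
  toFun z := (oddOuter q m z, oddIn q m z)
  invFun p := oddDec q m p.1 p.2
  left_inv z := oddDec_left q m z
  right_inv p := Prod.ext (oddDec_right_outer q m hm p.1 p.2) (oddDec_right_inner q m p.1 p.2)

lemma odd_count (hm : 1 ≤ m) (C' : Set (Fin m → ZMod q)) :
    Set.ncard {z : Fin (2 * m - 1) → Fin q | oddOuter q m z ∈ C'} =
      q ^ (m - 1) * Nat.card C' := by
  classical
  have hset : {z : Fin (2 * m - 1) → Fin q | oddOuter q m z ∈ C'} =
      (oddEquiv q m hm) ⁻¹' (C' ×ˢ (Set.univ : Set (Fin (m - 1) → Fin q))) := by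
    ext z
    simp [oddEquiv, Set.mem_prod]
  have him : (oddEquiv q m hm) ⁻¹' (C' ×ˢ (Set.univ : Set (Fin (m - 1) → Fin q))) =
      (oddEquiv q m hm).symm '' (C' ×ˢ Set.univ) := by
    rw [Equiv.image_eq_preimage_symm, Equiv.symm_symm]
  rw [hset, him, Set.ncard_image_of_injective _ (oddEquiv q m hm).symm.injective,
    ← Nat.card_coe_set_eq, Nat.card_congr (Equiv.Set.prod _ _), Nat.card_prod,
    Nat.card_congr (Equiv.Set.univ _), Nat.card_eq_fintype_card (α := Fin (m-1) → Fin q)]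
  simp [mul_comm]

end count

/-- If `C' ⊆ ℤ_qᵐ` (with `q > 2`, `m ≥ 1`) is single-error-correcting for `ℛ_q` and
`|C'| = K`, then `C = {z ∈ {0,…,q-1}^{2m-1} : oddOuter z ∈ C'}` has cardinality
`q^{m-1}·K` and is a `1`-code of odd length `2m-1`: `Δ(x,y) ≥ 2` for distinct
`x, y ∈ C`. -/
theorem concat_odd_one_code (q m : ℕ) (hq : 2 < q) (hm : 1 ≤ m)
    (C' : Set (Fin m → ZMod q)) (K : ℕ) (hK : Nat.card C' = K)
    (hsec : ∀ c ∈ C', ∀ c' ∈ C', c ≠ c' → Disjoint (RBall c) (RBall c')) :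
    Set.ncard {z : Fin (2 * m - 1) → Fin q | oddOuter q m z ∈ C'} = q ^ (m - 1) * K ∧
    ∀ x y : Fin (2 * m - 1) → Fin q,
      oddOuter q m x ∈ C' → oddOuter q m y ∈ C' → x ≠ y → 2 ≤ Dasym x y := by
  haveI : NeZero q := ⟨by omega⟩
  haveI : Fact (1 < q) := ⟨by omega⟩
  refine ⟨by rw [odd_count q m hm C', hK], ?_⟩
  intro x y hx hy hxy
  by_contra hcon
  push_neg at hcon
  -- the coordinatewise integer differences
  set d : Fin (2 * m - 1) → ℤ := fun i => ((x i : ℕ) : ℤ) - ((y i : ℕ) : ℤ) with hd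
  have hN1 : Nasym x y ≤ 1 := by
    have := le_max_left (Nasym x y) (Nasym y x); rw [← Dasym] at this; omega
  have hN2 : Nasym y x ≤ 1 := by
    have := le_max_right (Nasym x y) (Nasym y x); rw [← Dasym] at this; omega
  have hNyx : Nasym y x = ∑ k, max (d k) 0 := rfl
  have hNxy : Nasym x y = ∑ k, max (-(d k)) 0 := by
    rw [Nasym]; congr 1; funext k; rw [hd]; ring_nf
  have hterm1 : ∀ i : Fin (2 * m - 1), max (d i) 0 ≤ 1 := by
    intro i
    rw [hNyx] at hN2
    exact le_trans (Finset.single_le_sum (f := fun k => max (d k) 0)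
      (fun k _ => le_max_right (d k) 0) (Finset.mem_univ i)) hN2
  have hterm2 : ∀ i : Fin (2 * m - 1), max (-(d i)) 0 ≤ 1 := by
    intro i
    rw [hNxy] at hN1
    exact le_trans (Finset.single_le_sum (f := fun k => max (-(d k)) 0)
      (fun k _ => le_max_right (-(d k)) 0) (Finset.mem_univ i)) hN1
  have hub : ∀ i, d i ≤ 1 := fun i => le_trans (le_max_left _ 0) (hterm1 i)
  have hlb : ∀ i, -1 ≤ d i := fun i => by have := le_trans (le_max_left _ 0) (hterm2 i); omega
  have hpos : ∀ i i' : Fin (2 * m - 1), i ≠ i' → 1 ≤ d i → 1 ≤ d i' → False := by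
    intro i i' hne h1 h2
    have hsum : max (d i) 0 + max (d i') 0 ≤ Nasym y x := by
      rw [hNyx]
      have h := Finset.sum_le_sum_of_subset_of_nonneg (Finset.subset_univ ({i, i'} : Finset _))
        (fun k _ _ => le_max_right (d k) 0)
      rwa [Finset.sum_pair hne] at h
    have e1 : max (d i) 0 = d i := max_eq_left (by omega)
    have e2 : max (d i') 0 = d i' := max_eq_left (by omega)
    omega
  have hneg : ∀ i i' : Fin (2 * m - 1), i ≠ i' → d i ≤ -1 → d i' ≤ -1 → False := by
    intro i i' hne h1 h2
    have hsum : max (-(d i)) 0 + max (-(d i')) 0 ≤ Nasym x y := by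
      rw [hNxy]
      have h := Finset.sum_le_sum_of_subset_of_nonneg (Finset.subset_univ ({i, i'} : Finset _))
        (fun k _ _ => le_max_right (-(d k)) 0)
      rwa [Finset.sum_pair hne] at h
    have e1 : max (-(d i)) 0 = -(d i) := max_eq_left (by omega)
    have e2 : max (-(d i')) 0 = -(d i') := max_eq_left (by omega)
    omega
  have hdzero : ∀ i, d i = 0 → x i = y i := by
    intro i h
    rw [hd] at h
    simp only at h
    ext
    omega
  -- the outer coordinate of an inner index
  have hoiv : ∀ i : Fin (2 * m - 1), ((i : ℕ) + 1) / 2 < m := fun i => by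
    have := i.isLt; omega
  -- computation of outer differences
  have Louter0 : ∀ j : Fin m, (j : ℕ) = 0 →
      oddOuter q m x j - oddOuter q m y j = ((d ⟨0, by have := j.isLt; omega⟩ : ℤ) : ZMod q) := by
    intro j h0
    simp only [oddOuter, dif_pos h0, hd]
    push_cast
    ring
  have Louter1 : ∀ j : Fin m, (j : ℕ) ≠ 0 →
      oddOuter q m x j - oddOuter q m y j =
        ((d ⟨2 * (j : ℕ), by have := j.isLt; omega⟩ -
          d ⟨2 * (j : ℕ) - 1, by have := j.isLt; omega⟩ : ℤ) : ZMod q) := by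
    intro j h0
    simp only [oddOuter, dif_neg h0, hd]
    push_cast
    ring
  have Lzero : ∀ j : Fin m, (∀ i : Fin (2 * m - 1), ((i : ℕ) + 1) / 2 = (j : ℕ) → d i = 0) →
      oddOuter q m x j = oddOuter q m y j := by
    intro j hz
    by_cases h0 : (j : ℕ) = 0
    · have := Louter0 j h0
      rw [hz ⟨0, by have := j.isLt; omega⟩ (by simp only [Fin.val_mk]; omega)] at this
      rw [← sub_eq_zero, this]
      norm_num
    · have := Louter1 j h0
      rw [hz ⟨2 * (j : ℕ), by have := j.isLt; omega⟩ (by simp only [Fin.val_mk]; omega),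
        hz ⟨2 * (j : ℕ) - 1, by have := j.isLt; omega⟩ (by simp only [Fin.val_mk]; omega)] at this
      rw [← sub_eq_zero, this]
      norm_num
  have Lsolo : ∀ a : Fin (2 * m - 1),
      (∀ i, i ≠ a → ((i : ℕ) + 1) / 2 = ((a : ℕ) + 1) / 2 → d i = 0) →
      ∃ t : ℤ, (t = d a ∨ t = -(d a)) ∧
        oddOuter q m x ⟨((a : ℕ) + 1) / 2, hoiv a⟩ -
          oddOuter q m y ⟨((a : ℕ) + 1) / 2, hoiv a⟩ = (t : ZMod q) := by
    intro a hz
    by_cases h0 : ((a : ℕ) + 1) / 2 = 0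
    · have ha0 : (a : ℕ) = 0 := by omega
      refine ⟨d a, Or.inl rfl, ?_⟩
      have := Louter0 ⟨((a : ℕ) + 1) / 2, hoiv a⟩ (by simp only [Fin.val_mk]; omega)
      rw [this]
      congr 2
      exact Fin.ext (by simp only [Fin.val_mk]; omega)
    · have := Louter1 ⟨((a : ℕ) + 1) / 2, hoiv a⟩ (by simp only [Fin.val_mk]; omega)
      simp only [Fin.val_mk] at this
      by_cases ha : (a : ℕ) = 2 * (((a : ℕ) + 1) / 2)
      · refine ⟨d a, Or.inl rfl, ?_⟩
        rw [this,
          hz ⟨2 * (((a : ℕ) + 1) / 2) - 1, by have := a.isLt; omega⟩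
            (by intro h; apply absurd (Fin.val_eq_of_eq h); simp only [Fin.val_mk]; omega)
            (by simp only [Fin.val_mk]; omega)]
        have ea : (⟨2 * (((a : ℕ) + 1) / 2), by have := a.isLt; omega⟩ : Fin (2 * m - 1)) = a :=
          Fin.ext (by simp only [Fin.val_mk]; omega)
        rw [ea]
        norm_num
      · refine ⟨-(d a), Or.inr rfl, ?_⟩
        rw [this,
          hz ⟨2 * (((a : ℕ) + 1) / 2), by have := a.isLt; omega⟩
            (by intro h; apply absurd (Fin.val_eq_of_eq h); simp only [Fin.val_mk]; omega)
            (by simp only [Fin.val_mk]; omega)]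
        have ea : (⟨2 * (((a : ℕ) + 1) / 2) - 1, by have := a.isLt; omega⟩ : Fin (2 * m - 1)) = a :=
          Fin.ext (by simp only [Fin.val_mk]; omega)
        rw [ea]
        norm_num
  -- there is a coordinate where x and y differ
  obtain ⟨i0, hi0⟩ : ∃ i, d i ≠ 0 := by
    by_contra hall
    push_neg at hall
    exact hxy (funext fun i => hdzero i (hall i))
  have hcontra : ∀ c c' : Fin m → ZMod q, c = oddOuter q m x → c' = oddOuter q m y →
      c ≠ c' ∧ ¬ Disjoint (RBall c) (RBall c') → False := by
    rintro c c' rfl rfl ⟨hne, hnd⟩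
    exact hnd (hsec _ hx _ hy hne)
  by_cases hsingle : ∀ i, i ≠ i0 → d i = 0
  -- Case 1 : x and y differ in exactly one coordinate
  · obtain ⟨t, ht, heq⟩ := Lsolo i0 (fun i hi _ => hsingle i hi)
    have ht1 : t = 1 ∨ t = -1 := by
      have h1 := hub i0; have h2 := hlb i0; omega
    refine hcontra _ _ rfl rfl (rball_one (by omega) _ _ ⟨((i0 : ℕ) + 1) / 2, hoiv i0⟩
      ((t : ℤ) : ZMod q) ?_ (by linear_combination heq) ?_)
    · rcases ht1 with rfl | rfl
      · left; norm_num
      · right; norm_num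
    · intro j hj
      apply Lzero
      intro i hoi
      apply hsingle
      intro h
      subst h
      exact hj (Fin.ext (by simp only [Fin.val_mk]; omega))
  -- Case 2 : x and y differ in exactly two coordinates
  · push_neg at hsingle
    obtain ⟨i1, hi1ne, hi1⟩ := hsingle
    obtain ⟨a, b, hab, hda, hdb⟩ : ∃ a b : Fin (2 * m - 1), a ≠ b ∧ d a = 1 ∧ d b = -1 := by
      have h1 := hub i0; have h2 := hlb i0; have h3 := hub i1; have h4 := hlb i1
      have hp : ¬(1 ≤ d i0 ∧ 1 ≤ d i1) := fun ⟨u, v⟩ => hpos i0 i1 (Ne.symm hi1ne) u v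
      have hn : ¬(d i0 ≤ -1 ∧ d i1 ≤ -1) := fun ⟨u, v⟩ => hneg i0 i1 (Ne.symm hi1ne) u v
      rcases (by omega : d i0 = 1 ∧ d i1 = -1 ∨ d i0 = -1 ∧ d i1 = 1) with ⟨u, v⟩ | ⟨u, v⟩
      · exact ⟨i0, i1, Ne.symm hi1ne, u, v⟩
      · exact ⟨i1, i0, hi1ne, v, u⟩
    have hrest0 : ∀ i, i ≠ a → i ≠ b → d i = 0 := by
      intro i hia hib
      by_contra hne0
      have h1 := hub i; have h2 := hlb i
      rcases (by omega : d i = 1 ∨ d i = -1) with h | h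
      · exact hpos i a hia (by omega) (by omega)
      · exact hneg i b hib (by omega) (by omega)
    by_cases hsame : ((a : ℕ) + 1) / 2 = ((b : ℕ) + 1) / 2
    -- 2a : the two differing coordinates belong to the same outer pair
    · have hj0 : ((a : ℕ) + 1) / 2 ≠ 0 := by
        intro h
        apply hab
        apply Fin.ext
        omega
      have := Louter1 ⟨((a : ℕ) + 1) / 2, hoiv a⟩ (by simp only [Fin.val_mk]; omega)
      simp only [Fin.val_mk] at this
      have hvals : (a : ℕ) = 2 * (((a : ℕ) + 1) / 2) ∧ (b : ℕ) = 2 * (((a : ℕ) + 1) / 2) - 1 ∨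
          (b : ℕ) = 2 * (((a : ℕ) + 1) / 2) ∧ (a : ℕ) = 2 * (((a : ℕ) + 1) / 2) - 1 := by
        have hne : (a : ℕ) ≠ (b : ℕ) := fun h => hab (Fin.ext h)
        omega
      have key : ∃ u : ZMod q, (u = 1 ∨ u = -1) ∧
          oddOuter q m x ⟨((a : ℕ) + 1) / 2, hoiv a⟩ =
            oddOuter q m y ⟨((a : ℕ) + 1) / 2, hoiv a⟩ + u + u := by
        rcases hvals with ⟨hva, hvb⟩ | ⟨hvb, hva⟩
        · have ea : (⟨2 * (((a : ℕ) + 1) / 2), by have := a.isLt; omega⟩ : Fin (2 * m - 1)) = a :=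
            Fin.ext (by simp only [Fin.val_mk]; omega)
          have eb : (⟨2 * (((a : ℕ) + 1) / 2) - 1, by have := a.isLt; omega⟩ : Fin (2 * m - 1)) = b :=
            Fin.ext (by simp only [Fin.val_mk]; omega)
          rw [ea, eb, hda, hdb] at this
          refine ⟨1, Or.inl rfl, ?_⟩
          have : oddOuter q m x ⟨((a : ℕ) + 1) / 2, hoiv a⟩ -
              oddOuter q m y ⟨((a : ℕ) + 1) / 2, hoiv a⟩ = ((2 : ℤ) : ZMod q) := by
            rw [this]; norm_num
          push_cast at this
          linear_combination this
        · have ea : (⟨2 * (((a : ℕ) + 1) / 2) - 1, by have := a.isLt; omega⟩ : Fin (2 * m - 1)) = a :=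
            Fin.ext (by simp only [Fin.val_mk]; omega)
          have eb : (⟨2 * (((a : ℕ) + 1) / 2), by have := a.isLt; omega⟩ : Fin (2 * m - 1)) = b :=
            Fin.ext (by simp only [Fin.val_mk]; omega)
          rw [ea, eb, hda, hdb] at this
          refine ⟨-1, Or.inr rfl, ?_⟩
          have : oddOuter q m x ⟨((a : ℕ) + 1) / 2, hoiv a⟩ -
              oddOuter q m y ⟨((a : ℕ) + 1) / 2, hoiv a⟩ = ((-2 : ℤ) : ZMod q) := by
            rw [this]; norm_num
          push_cast at this
          linear_combination this
      obtain ⟨u, hu, hcc⟩ := key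
      refine hcontra _ _ rfl rfl (rball_two hq _ _ ⟨((a : ℕ) + 1) / 2, hoiv a⟩ u hu hcc ?_)
      intro j hj
      apply Lzero
      intro i hoi
      apply hrest0
      · intro h
        subst h
        exact hj (Fin.ext (by simp only [Fin.val_mk]; omega))
      · intro h
        subst h
        apply hj
        apply Fin.ext
        simp only [Fin.val_mk]
        omega
    -- 2b : the two differing coordinates belong to different outer pairs
    · obtain ⟨t1, ht1, heq1⟩ := Lsolo a (by
        intro i hia hoi
        apply hrest0 i hia
        intro h
        subst h
        exact hsame hoi.symm)
      obtain ⟨t2, ht2, heq2⟩ := Lsolo b (by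
        intro i hib hoi
        apply hrest0 i _ hib
        intro h
        subst h
        exact hsame hoi)
      have ht1' : t1 = 1 ∨ t1 = -1 := by omega
      have ht2' : t2 = 1 ∨ t2 = -1 := by omega
      refine hcontra _ _ rfl rfl (rball_mixed (by omega) _ _
        ⟨((a : ℕ) + 1) / 2, hoiv a⟩ ⟨((b : ℕ) + 1) / 2, hoiv b⟩
        (fun h => hsame (by have := Fin.val_eq_of_eq h; simpa using this))
        ((t1 : ℤ) : ZMod q) ((t2 : ℤ) : ZMod q) ?_ ?_
        (by linear_combination heq1) (by linear_combination heq2) ?_)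
      · rcases ht1' with rfl | rfl
        · left; norm_num
        · right; norm_num
      · rcases ht2' with rfl | rfl
        · left; norm_num
        · right; norm_num
      · intro j hja hjb
        apply Lzero
        intro i hoi
        apply hrest0
        · intro h
          subst h
          exact hja (Fin.ext (by simp only [Fin.val_mk]; omega))
        · intro h
          subst h
          exact hjb (Fin.ext (by simp only [Fin.val_mk]; omega))
end

section
/- Let q ≥ 2, n ≥ 1, t̃ ≥ 1, ℓ ≥ 1, and let C ⊆ {0,1,…,q−1}^n be a t̃ℓ-code, i.e., Δ(x,y) ≥ t̃ℓ + 1 for all distinct x, y ∈ C. Then C corrects t̃ asymmetric ℓ-limited-magnitude errors (without wrap-around): for all distinct x, x̂ ∈ C there exist no vectors e, ê ∈ ℤ^n, each with at most t̃ nonzero coordinates and entries in {0,…,ℓ}, such that x − e = x̂ − ê with x − e ∈ {0,…,q−1}^n. -/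
/-- If `C ⊆ {0,…,q-1}ⁿ` is a `t̃ℓ`-code (i.e. `Δ(x,y) ≥ t̃ℓ + 1` for distinct codewords),
then `C` corrects `t̃` asymmetric `ℓ`-limited-magnitude errors (without wrap-around). -/
theorem t_code_corrects_limited_magnitude (q n tt ℓ : ℕ) (hq : 2 ≤ q) (hn : 1 ≤ n)
    (ht : 1 ≤ tt) (hl : 1 ≤ ℓ) (C : Set (Fin n → Fin q))
    (hC : ∀ x ∈ C, ∀ y ∈ C, x ≠ y → (tt * ℓ : ℤ) + 1 ≤ Dasym x y) :
    ∀ x ∈ C, ∀ x' ∈ C, x ≠ x' →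
      ¬∃ e e' : Fin n → ℤ,
        (Finset.univ.filter fun i => e i ≠ 0).card ≤ tt ∧ (∀ i, 0 ≤ e i ∧ e i ≤ ℓ) ∧
        (Finset.univ.filter fun i => e' i ≠ 0).card ≤ tt ∧ (∀ i, 0 ≤ e' i ∧ e' i ≤ ℓ) ∧
        (∀ i, ((x i : ℕ) : ℤ) - e i = ((x' i : ℕ) : ℤ) - e' i) ∧
        (∀ i, 0 ≤ ((x i : ℕ) : ℤ) - e i ∧ ((x i : ℕ) : ℤ) - e i ≤ (q : ℤ) - 1) := by
  intro x hx x' hx' hne ⟨e, e', hce, hbe, hce', hbe', heq, _⟩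
  have key : ∀ (a b : Fin n → Fin q) (f g : Fin n → ℤ),
      (Finset.univ.filter fun i => g i ≠ 0).card ≤ tt →
      (∀ i, 0 ≤ g i ∧ g i ≤ ℓ) → (∀ i, 0 ≤ f i) →
      (∀ i, ((a i : ℕ) : ℤ) - f i = ((b i : ℕ) : ℤ) - g i) →
      Nasym a b ≤ (tt * ℓ : ℤ) := by
    intro a b f g hcard hg hf heq
    have h1 : ∀ i, max (((b i : ℕ) : ℤ) - ((a i : ℕ) : ℤ)) 0
        ≤ if g i ≠ 0 then (ℓ : ℤ) else 0 := by
      intro i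
      have hbi : ((b i : ℕ) : ℤ) - ((a i : ℕ) : ℤ) = g i - f i := by
        have := heq i; linarith
      rw [hbi]
      split_ifs with h
      · have := hf i; have := (hg i).2
        have hl0 : (0:ℤ) ≤ (ℓ:ℤ) := by positivity
        simp only [max_le_iff]
        exact ⟨by linarith, hl0⟩
      · push_neg at h
        have := hf i
        simp only [max_le_iff]
        exact ⟨by linarith [h ▸ le_refl (g i)], le_rfl⟩
    calc Nasym a b ≤ ∑ i, if g i ≠ 0 then (ℓ : ℤ) else 0 :=
          Finset.sum_le_sum fun i _ => h1 i
      _ = (Finset.univ.filter fun i => g i ≠ 0).card * (ℓ : ℤ) := by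
          rw [← Finset.sum_filter, Finset.sum_const, nsmul_eq_mul]
      _ ≤ (tt : ℤ) * ℓ := by
          have : ((Finset.univ.filter fun i => g i ≠ 0).card : ℤ) ≤ tt := by
            exact_mod_cast hcard
          have hl0 : (0:ℤ) ≤ (ℓ:ℤ) := by positivity
          exact mul_le_mul_of_nonneg_right this hl0
  have hxx' : Nasym x x' ≤ (tt * ℓ : ℤ) :=
    key x x' e e' hce' hbe' (fun i => (hbe i).1) heq
  have hx'x : Nasym x' x ≤ (tt * ℓ : ℤ) :=
    key x' x e' e hce hbe (fun i => (hbe' i).1) (fun i => (heq i).symm)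
  have := hC x hx x' hx' hne
  have : Dasym x x' ≤ (tt * ℓ : ℤ) := max_le hxx' hx'x
  omega
end
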